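/- For an involution y in a symmetric group S_n (with generating set the simple transpositions) and a simple transposition s, if conjugation satisfies sys = y at the level of length, i.e. ℓ(sys) = ℓ(y), then sys = y. -/

import Mathlib

set_option maxHeartbeats 1000000

/-- The Coxeter length of a permutation of `Fin n`, i.e. its number of inversions. -/
def ell {n : ℕ} (w : Equiv.Perm (Fin n)) : ℕ :=
  (Finset.univ.filter (fun p : Fin n × Fin n => p.1 < p.2 ∧ w p.2 < w p.1)).card

def Fset {n : ℕ} (w : Equiv.Perm (Fin n)) : Finset (Fin n × Fin n) :=
  Finset.univ.filter (fun p : Fin n × Fin n => p.1 < p.2 ∧ w p.2 < w p.1)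

open Classical in
noncomputable def Gset {n : ℕ} (a b : Fin n) (y : Equiv.Perm (Fin n)) : Finset (Fin n × Fin n) :=
  Finset.univ.filter (fun r : Fin n × Fin n => r.1 < r.2 ∧
    (Xor' (Xor' (y r.2 < y r.1) ((y r.1 = a ∧ y r.2 = b) ∨ (y r.1 = b ∧ y r.2 = a)))
      (r.1 = a ∧ r.2 = b)))

lemma ell_eq_Fset {n : ℕ} (w : Equiv.Perm (Fin n)) : ell w = (Fset w).card := rfl

lemma keylem {n : ℕ} (a b : Fin n) (hb : (b:ℕ) = (a:ℕ) + 1) (u v : Fin n) (huv : u ≠ v) :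
    (Equiv.swap a b u < Equiv.swap a b v ↔ (u < v ↔ ¬((u = a ∧ v = b) ∨ (u = b ∧ v = a)))) := by
  have huv' : (u:ℕ) ≠ (v:ℕ) := fun hh => huv (Fin.ext hh)
  simp only [Equiv.swap_apply_def]
  split_ifs <;> simp only [Fin.lt_def, Fin.ext_iff] at * <;> omega

lemma pairswap {α : Type*} {u v a b : α} :
    ((u = a ∧ v = b) ∨ (u = b ∧ v = a)) ↔ ((v = a ∧ u = b) ∨ (v = b ∧ u = a)) := by tauto

lemma hx1 (I Y Y' X : Prop) (hYY : Y ↔ Y') (hinv : I ↔ ¬Y') (hX : ¬X) :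
    Xor' (Xor' I Y) X := by simp only [Xor', Xor]; tauto

lemma hx2 (I J Y Y' X : Prop) (hJ : J ↔ ¬I) (hYY : Y ↔ Y') (hinv : I ↔ ¬Y') (hX : X) :
    Xor' (Xor' J Y) X := by simp only [Xor', Xor]; tauto

lemma hx3 (I Y Y' X : Prop) (hYY : Y ↔ Y') (hX : ¬X) (hcond : Xor' (Xor' I Y) X) :
    I ↔ ¬Y' := by simp only [Xor', Xor] at hcond; tauto

lemma hx4 (I J Y Y' X : Prop) (hJ : J ↔ ¬I) (hYY : Y ↔ Y') (hX : X) (hcond : Xor' (Xor' J Y) X) :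
    I ↔ ¬Y' := by simp only [Xor', Xor] at hcond; tauto

lemma count_lem {n : ℕ} (a b : Fin n) (hb : (b:ℕ) = (a:ℕ) + 1) (y : Equiv.Perm (Fin n)) :
    ell (Equiv.swap a b * y * Equiv.swap a b) = (Gset a b y).card := by
  set s := Equiv.swap a b with hsdef
  have hablt : a < b := by rw [Fin.lt_def]; omega
  have key := keylem a b hb
  have hss : ∀ x, s (s x) = x := fun x => Equiv.swap_apply_self a b x
  have hsa : s a = b := Equiv.swap_apply_left a b
  have hsb : s b = a := Equiv.swap_apply_right a b
  unfold ell Gset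
  apply Finset.card_nbij' (fun p => if s p.1 < s p.2 then (s p.1, s p.2) else (s p.2, s p.1))
    (fun p => if s p.1 < s p.2 then (s p.1, s p.2) else (s p.2, s p.1))
  · intro p hp
    simp only [Finset.mem_coe, Finset.mem_filter, Finset.mem_univ, true_and] at hp ⊢
    simp only [Equiv.Perm.mul_apply] at hp ⊢
    obtain ⟨hlt, hinv⟩ := hp
    by_cases hc : p.1 = a ∧ p.2 = b
    · obtain ⟨h1, h2⟩ := hc
      rw [h1, h2, hsa, hsb] at hinv
      have hne : y a ≠ y b := y.injective.ne (ne_of_lt hablt)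
      rw [key _ _ hne] at hinv
      have hnlt : ¬ (s p.1 < s p.2) := by rw [h1, h2, hsa, hsb]; exact not_lt.2 hablt.le
      rw [if_neg hnlt]
      simp only [h1, h2, hsa, hsb]
      refine ⟨hablt, ?_⟩
      have hJ : y b < y a ↔ ¬ (y a < y b) :=
        ⟨fun h h' => absurd (h.trans h') (lt_irrefl _), fun h => hne.lt_or_gt.resolve_left h⟩
      exact hx2 _ _ _ _ _ hJ Iff.rfl hinv ⟨trivial, trivial⟩
    · have hne12 : p.1 ≠ p.2 := ne_of_lt hlt
      have hs12 : s p.1 < s p.2 := by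
        rw [key _ _ hne12]
        have hr : ¬(p.1 = b ∧ p.2 = a) := by
          rintro ⟨e1, e2⟩
          rw [e1, e2] at hlt
          exact absurd hlt (not_lt.2 hablt.le)
        tauto
      rw [if_pos hs12]
      refine ⟨hs12, ?_⟩
      have hne' : y (s p.2) ≠ y (s p.1) := y.injective.ne (s.injective.ne hne12.symm)
      rw [key _ _ hne'] at hinv
      have hX : ¬(s p.1 = a ∧ s p.2 = b) := by
        rintro ⟨e1, e2⟩
        have e1' : p.1 = b := by rw [← hss p.1, e1, hsa]
        have e2' : p.2 = a := by rw [← hss p.2, e2, hsb]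
        rw [e1', e2'] at hlt
        exact absurd hlt (not_lt.2 hablt.le)
      exact hx1 _ _ _ _ pairswap hinv hX
  · intro p hp
    simp only [Finset.mem_coe, Finset.mem_filter, Finset.mem_univ, true_and] at hp ⊢
    simp only [Equiv.Perm.mul_apply] at hp ⊢
    obtain ⟨hlt, hcond⟩ := hp
    by_cases hc : p.1 = a ∧ p.2 = b
    · obtain ⟨h1, h2⟩ := hc
      have hnlt : ¬ (s p.1 < s p.2) := by rw [h1, h2, hsa, hsb]; exact not_lt.2 hablt.le
      rw [if_neg hnlt]
      simp only [h1, h2, hsa, hsb] at hcond ⊢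
      refine ⟨hablt, ?_⟩
      have hne : y a ≠ y b := y.injective.ne (ne_of_lt hablt)
      rw [key _ _ hne]
      have hJ : y b < y a ↔ ¬ (y a < y b) :=
        ⟨fun h h' => absurd (h.trans h') (lt_irrefl _), fun h => hne.lt_or_gt.resolve_left h⟩
      exact hx4 _ _ _ _ _ hJ Iff.rfl ⟨trivial, trivial⟩ hcond
    · have hne12 : p.1 ≠ p.2 := ne_of_lt hlt
      have hs12 : s p.1 < s p.2 := by
        rw [key _ _ hne12]
        have hr : ¬(p.1 = b ∧ p.2 = a) := by
          rintro ⟨e1, e2⟩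
          rw [e1, e2] at hlt
          exact absurd hlt (not_lt.2 hablt.le)
        tauto
      rw [if_pos hs12]
      refine ⟨hs12, ?_⟩
      rw [hss, hss]
      have hne' : y p.2 ≠ y p.1 := y.injective.ne hne12.symm
      rw [key _ _ hne']
      exact hx3 _ _ _ _ pairswap hc hcond
  · intro p hp
    simp only [Finset.mem_coe, Finset.mem_filter] at hp
    have hlt := hp.2.1
    dsimp only
    by_cases hc : s p.1 < s p.2
    · rw [if_pos hc]
      simp only [hss]
      rw [if_pos hlt]
    · rw [if_neg hc]
      simp only [hss]
      have : ¬ (p.2 < p.1) := not_lt.2 hlt.le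
      rw [if_neg this]
  · intro p hp
    simp only [Finset.mem_coe, Finset.mem_filter] at hp
    have hlt := hp.2.1
    dsimp only
    by_cases hc : s p.1 < s p.2
    · rw [if_pos hc]
      simp only [hss]
      rw [if_pos hlt]
    · rw [if_neg hc]
      simp only [hss]
      have : ¬ (p.2 < p.1) := not_lt.2 hlt.le
      rw [if_neg this]

lemma xormk1 (P Q : Prop) (h1 : P) (h2 : ¬Q) : Xor' P Q := Or.inl ⟨h1, h2⟩
lemma xormk2 (P Q : Prop) (h1 : ¬P) (h2 : Q) : Xor' P Q := Or.inr ⟨h2, h1⟩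
lemma xorboth (P Q : Prop) (h1 : P) (h2 : Q) : ¬ Xor' P Q :=
  fun h => h.elim (fun x => x.2 h2) (fun x => x.2 h1)
lemma xornone (P Q : Prop) (h1 : ¬P) (h2 : ¬Q) : ¬ Xor' P Q :=
  fun h => h.elim (fun x => h1 x.1) (fun x => h2 x.1)
lemma xorext (I Y X : Prop) (hY : ¬Y) (hX : ¬X) (h : Xor' (Xor' I Y) X) : I := by
  rcases h with ⟨h1, _⟩ | ⟨h1, _⟩
  · rcases h1 with ⟨i, _⟩ | ⟨yy, _⟩
    · exact i
    · exact absurd yy hY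
  · exact absurd h1 hX

lemma case1 {n : ℕ} (a b : Fin n) (hablt : a < b) (y : Equiv.Perm (Fin n))
    (hyy : ∀ x, y (y x) = x)
    (hp : ¬((y a = a ∧ y b = b) ∨ (y a = b ∧ y b = a))) (hlt1 : y a < y b) :
    Gset a b y = insert (a, b) (insert (y a, y b) (Fset y)) := by
  have hba : ¬ (b < a) := not_lt.2 hablt.le
  unfold Gset Fset
  ext r
  simp only [Finset.mem_filter, Finset.mem_univ, true_and, Finset.mem_insert]
  constructor
  · rintro ⟨hrlt, hx⟩
    by_cases hX : r.1 = a ∧ r.2 = b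
    · exact Or.inl (Prod.ext hX.1 hX.2)
    · by_cases hY : (y r.1 = a ∧ y r.2 = b) ∨ (y r.1 = b ∧ y r.2 = a)
      · rcases hY with ⟨e1, e2⟩ | ⟨e1, e2⟩
        · have f1 := congrArg y e1
          have f2 := congrArg y e2
          rw [hyy] at f1 f2
          exact Or.inr (Or.inl (Prod.ext f1 f2))
        · have f1 := congrArg y e1
          have f2 := congrArg y e2
          rw [hyy] at f1 f2
          rw [f1, f2] at hrlt
          exact absurd hrlt (lt_asymm hlt1)
      · exact Or.inr (Or.inr ⟨hrlt, xorext _ _ _ hY hX hx⟩)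
  · rintro (rfl | rfl | ⟨hrlt, hinv⟩)
    · refine ⟨hablt, ?_⟩
      dsimp only
      exact xormk2 _ _ (xornone _ _ (lt_asymm hlt1) hp) ⟨by trivial, by trivial⟩
    · refine ⟨hlt1, ?_⟩
      dsimp only
      simp only [hyy]
      have h2 : ¬ (y a = a ∧ y b = b) := fun hh => hp (Or.inl hh)
      exact xormk1 _ _ (xormk2 _ _ hba (Or.inl ⟨by trivial, by trivial⟩)) h2
    · refine ⟨hrlt, ?_⟩
      have hX : ¬(r.1 = a ∧ r.2 = b) := by
        rintro ⟨e1, e2⟩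
        rw [e1, e2] at hinv
        exact absurd hinv (lt_asymm hlt1)
      have hY : ¬((y r.1 = a ∧ y r.2 = b) ∨ (y r.1 = b ∧ y r.2 = a)) := by
        rintro (⟨e1, e2⟩ | ⟨e1, e2⟩)
        · rw [e1, e2] at hinv
          exact absurd hinv hba
        · have f1 := congrArg y e1
          have f2 := congrArg y e2
          rw [hyy] at f1 f2
          rw [f1, f2] at hrlt
          exact absurd hrlt (lt_asymm hlt1)
      exact xormk1 _ _ (xormk1 _ _ hinv hY) hX

lemma case2 {n : ℕ} (a b : Fin n) (hablt : a < b) (y : Equiv.Perm (Fin n))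
    (hyy : ∀ x, y (y x) = x)
    (hp : ¬((y a = a ∧ y b = b) ∨ (y a = b ∧ y b = a))) (hlt2 : y b < y a) :
    Gset a b y = Fset y \ {(a, b), (y b, y a)} := by
  have hba : ¬ (b < a) := not_lt.2 hablt.le
  unfold Gset Fset
  ext r
  simp only [Finset.mem_filter, Finset.mem_univ, true_and, Finset.mem_sdiff,
    Finset.mem_insert, Finset.mem_singleton]
  constructor
  · rintro ⟨hrlt, hx⟩
    have hX : ¬(r.1 = a ∧ r.2 = b) := by
      rintro ⟨e1, e2⟩
      rw [e1, e2] at hx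
      exact xorboth _ _ (xormk1 _ _ hlt2 hp) ⟨rfl, rfl⟩ hx
    have hY : ¬((y r.1 = a ∧ y r.2 = b) ∨ (y r.1 = b ∧ y r.2 = a)) := by
      rintro (⟨e1, e2⟩ | ⟨e1, e2⟩)
      · have f1 := congrArg y e1
        have f2 := congrArg y e2
        rw [hyy] at f1 f2
        rw [f1, f2] at hrlt
        exact absurd hrlt (lt_asymm hlt2)
      · rw [e1, e2] at hx
        exact absurd hx (xornone _ _ (xorboth _ _ hablt (Or.inr ⟨rfl, rfl⟩)) hX)
    have hI : y r.2 < y r.1 := xorext _ _ _ hY hX hx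
    refine ⟨⟨hrlt, hI⟩, ?_⟩
    rintro (e | e)
    · rw [Prod.ext_iff] at e
      exact hX ⟨e.1, e.2⟩
    · rw [Prod.ext_iff] at e
      refine hY (Or.inr ⟨?_, ?_⟩)
      · rw [e.1, hyy]
      · rw [e.2, hyy]
  · rintro ⟨⟨hrlt, hinv⟩, hne2⟩
    refine ⟨hrlt, ?_⟩
    have hX : ¬(r.1 = a ∧ r.2 = b) := by
      rintro ⟨e1, e2⟩
      exact hne2 (Or.inl (Prod.ext e1 e2))
    have hY : ¬((y r.1 = a ∧ y r.2 = b) ∨ (y r.1 = b ∧ y r.2 = a)) := by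
      rintro (⟨e1, e2⟩ | ⟨e1, e2⟩)
      · rw [e1, e2] at hinv
        exact absurd hinv hba
      · have f1 := congrArg y e1
        have f2 := congrArg y e2
        rw [hyy] at f1 f2
        exact hne2 (Or.inr (Prod.ext f1 f2))
    exact xormk1 _ _ (xormk1 _ _ hinv hY) hX

lemma main_lem {n : ℕ} (a b : Fin n) (hb : (b:ℕ) = (a:ℕ) + 1) (y : Equiv.Perm (Fin n))
    (hy : y * y = 1) (h : ell (Equiv.swap a b * y * Equiv.swap a b) = ell y) :
    Equiv.swap a b * y * Equiv.swap a b = y := by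
  have hablt : a < b := by rw [Fin.lt_def]; omega
  have hba : ¬ (b < a) := not_lt.2 hablt.le
  have hyy : ∀ x, y (y x) = x := fun x => by
    have := congrArg (fun z : Equiv.Perm (Fin n) => z x) hy
    simpa [Equiv.Perm.mul_apply] using this
  have hne : y a ≠ y b := y.injective.ne (ne_of_lt hablt)
  by_cases hp : (y a = a ∧ y b = b) ∨ (y a = b ∧ y b = a)
  · have hswap : Equiv.swap (y a) (y b) = Equiv.swap a b := by
      rcases hp with ⟨h1, h2⟩ | ⟨h1, h2⟩
      · rw [h1, h2]
      · rw [h1, h2]; exact Equiv.swap_comm b a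
    have hyinv : y⁻¹ = y := inv_eq_of_mul_eq_one_right hy
    have hconj : y * Equiv.swap a b * y = Equiv.swap a b := by
      have h3 := Equiv.swap_apply_apply y a b
      rw [hswap, hyinv] at h3
      exact h3.symm
    have hcomm : y * Equiv.swap a b = Equiv.swap a b * y := by
      have h2 := congrArg (fun z => z * y) hconj
      simpa [mul_assoc, hy] using h2
    calc Equiv.swap a b * y * Equiv.swap a b
        = Equiv.swap a b * (Equiv.swap a b * y) := by rw [mul_assoc, hcomm]
      _ = y := by rw [← mul_assoc, Equiv.swap_mul_self, one_mul]
  · exfalso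
    have hcount := count_lem a b hb y
    rw [h, ell_eq_Fset] at hcount
    rcases hne.lt_or_gt with hlt1 | hlt2
    · rw [case1 a b hablt y hyy hp hlt1] at hcount
      have hPQ : ((a, b) : Fin n × Fin n) ≠ (y a, y b) := by
        intro e
        rw [Prod.ext_iff] at e
        exact hp (Or.inl ⟨e.1.symm, e.2.symm⟩)
      have hQFy : ((y a, y b) : Fin n × Fin n) ∉ Fset y := by
        unfold Fset
        simp only [Finset.mem_filter, Finset.mem_univ, true_and, not_and]
        intro _
        simp only [hyy]
        exact hba
      have hPnot : ((a, b) : Fin n × Fin n) ∉ insert (y a, y b) (Fset y) := by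
        simp only [Finset.mem_insert]
        rintro (e | e)
        · exact hPQ e
        · revert e
          unfold Fset
          simp only [Finset.mem_filter, Finset.mem_univ, true_and, not_and]
          exact fun hc => lt_asymm hlt1 hc.2
      rw [Finset.card_insert_of_notMem hPnot, Finset.card_insert_of_notMem hQFy] at hcount
      omega
    · rw [case2 a b hablt y hyy hp hlt2] at hcount
      have hPQ : ((a, b) : Fin n × Fin n) ≠ (y b, y a) := by
        intro e
        rw [Prod.ext_iff] at e
        exact hp (Or.inr ⟨e.2.symm, e.1.symm⟩)
      have hPFy : ((a, b) : Fin n × Fin n) ∈ Fset y := by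
        unfold Fset
        simp only [Finset.mem_filter, Finset.mem_univ, true_and]
        exact ⟨hablt, hlt2⟩
      have hQFy : ((y b, y a) : Fin n × Fin n) ∈ Fset y := by
        unfold Fset
        simp only [Finset.mem_filter, Finset.mem_univ, true_and]
        refine ⟨hlt2, ?_⟩
        simp only [hyy]
        exact hablt
      have hsub : ({(a, b), (y b, y a)} : Finset (Fin n × Fin n)) ⊆ Fset y := by
        intro x hx
        simp only [Finset.mem_insert, Finset.mem_singleton] at hx
        rcases hx with rfl | rfl
        · exact hPFy
        · exact hQFy
      rw [Finset.card_sdiff_of_subset hsub, Finset.card_pair hPQ] at hcount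
      have hle := Finset.card_le_card hsub
      rw [Finset.card_pair hPQ] at hle
      omega

/-- `s` is a simple transposition `(i, i+1)` of `Fin n`. -/
def IsSimple {n : ℕ} (s : Equiv.Perm (Fin n)) : Prop :=
  ∃ i : ℕ, ∃ h : i + 1 < n, s = Equiv.swap ⟨i, Nat.lt_of_succ_lt h⟩ ⟨i + 1, h⟩

/-- For an involution `y` in the symmetric group and a simple transposition `s`,
if `ℓ(sys) = ℓ(y)` then `sys = y`. -/
theorem stmt0 {n : ℕ} (y s : Equiv.Perm (Fin n)) (hy : y * y = 1)
    (hs : IsSimple s) (h : ell (s * y * s) = ell y) : s * y * s = y := by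
  obtain ⟨i, hin, rfl⟩ := hs
  exact main_lem ⟨i, Nat.lt_of_succ_lt hin⟩ ⟨i + 1, hin⟩ rfl y hy h
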